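/- Theorem 1 (unbiasedness of the MSE estimator): Assume π_{kl} > 0 for all k ≠ l. Define the random variable M̂ = Σ_{k∈U₂} I_k (π_k − a)² y_k² / (a² π_k) + Σ_{k≠l, k,l∈U₂} I_k I_l (π_k − a)(π_l − a) y_k y_l / (a² π_{kl}) + Σ_{k∈U} I_k (Δ_kk/π_k) y_k² / (π_k*)² + Σ_{k≠l, k,l∈U} I_k I_l (Δ_kl/π_{kl}) y_k y_l / (π_k* π_l*). Then E[M̂] = E[(t̂_IHT − t_y)²]. -/

import Mathlib

open MeasureTheory

lemma sq_expand {ι : Type*} [DecidableEq ι] (s : Finset ι) (u : ι → ℝ) :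
    (∑ k ∈ s, u k) ^ 2 = ∑ k ∈ s, u k ^ 2 + ∑ p ∈ s.offDiag, u p.1 * u p.2 := by
  rw [sq, Finset.sum_mul_sum, ← Finset.sum_product', ← Finset.diag_union_offDiag s,
    Finset.sum_union (Finset.disjoint_diag_offDiag s)]
  congr 1
  rw [Finset.sum_diag]
  exact Finset.sum_congr rfl fun k _ => (sq (u k)).symm

/-- Theorem 1 (unbiasedness of the MSE estimator): the random variable `M̂` built from the
sampled units is an unbiased estimator of the mean-squared error of the IHT estimator. -/
theorem iht_mse_estimator_unbiased
    {Ω : Type*} [MeasurableSpace Ω] (μ : Measure Ω) [IsProbabilityMeasure μ]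
    (N : ℕ) (y : Fin N → ℝ) (I : Fin N → Ω → ℝ)
    (hI01 : ∀ k, ∀ ω, I k ω = 0 ∨ I k ω = 1)
    (hIint : ∀ k, Integrable (I k) μ)
    (hIint2 : ∀ k l, Integrable (fun ω => I k ω * I l ω) μ)
    (π : Fin N → ℝ)
    (hπ : ∀ k, π k = ∫ ω, I k ω ∂μ)
    (hπmem : ∀ k, π k ∈ Set.Ioc (0 : ℝ) 1)
    (π2 : Fin N → Fin N → ℝ)
    (hπ2 : ∀ k l, k ≠ l → π2 k l = ∫ ω, I k ω * I l ω ∂μ)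
    (hπ2pos : ∀ k l, k ≠ l → 0 < π2 k l)
    (a : ℝ) (ha : a ∈ Set.Ioc (0 : ℝ) 1)
    (U2 : Finset (Fin N)) (K : ℕ) (hK : U2.card = K)
    (hU2 : ∀ k ∈ U2, π k ≤ a)
    (πs : Fin N → ℝ)
    (hπs : ∀ k, πs k = if k ∈ U2 then a else π k) :
    (∫ ω,
        ((∑ k ∈ U2, I k ω * ((π k - a) ^ 2 * y k ^ 2 / (a ^ 2 * π k)))
          + (∑ p ∈ U2.offDiag,
              I p.1 ω * I p.2 ω *
                ((π p.1 - a) * (π p.2 - a) * y p.1 * y p.2 / (a ^ 2 * π2 p.1 p.2)))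
          + (∑ k, I k ω * ((π k * (1 - π k) / π k) * y k ^ 2 / (πs k) ^ 2))
          + (∑ p ∈ (Finset.univ : Finset (Fin N)).offDiag,
              I p.1 ω * I p.2 ω *
                (((π2 p.1 p.2 - π p.1 * π p.2) / π2 p.1 p.2) * y p.1 * y p.2
                  / (πs p.1 * πs p.2)))) ∂μ)
      = ∫ ω, ((∑ k, I k ω * y k / πs k) - ∑ k, y k) ^ 2 ∂μ := by
  have ha0 : a ≠ 0 := ne_of_gt ha.1
  have hπ0 : ∀ k, π k ≠ 0 := fun k => ne_of_gt (hπmem k).1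
  have hπs0 : ∀ k, πs k ≠ 0 := by
    intro k; rw [hπs k]; split <;> [exact ha0; exact hπ0 k]
  have hIsq : ∀ k ω, I k ω * I k ω = I k ω := by
    intro k ω; rcases hI01 k ω with h | h <;> simp [h]
  -- basic integral computations
  have hA : ∀ (k : Fin N) (c : ℝ), (∫ ω, I k ω * c ∂μ) = π k * c := by
    intro k c; rw [integral_mul_const, ← hπ k]
  have hB : ∀ (k l : Fin N), k ≠ l → ∀ (c : ℝ),
      (∫ ω, I k ω * I l ω * c ∂μ) = π2 k l * c := by
    intro k l hkl c; rw [integral_mul_const, ← hπ2 k l hkl]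
  -- integrability pieces
  have int1 : Integrable (fun ω => ∑ k ∈ U2,
      I k ω * ((π k - a) ^ 2 * y k ^ 2 / (a ^ 2 * π k))) μ :=
    integrable_finset_sum _ fun k _ => (hIint k).mul_const _
  have int2 : Integrable (fun ω => ∑ p ∈ U2.offDiag,
      I p.1 ω * I p.2 ω *
        ((π p.1 - a) * (π p.2 - a) * y p.1 * y p.2 / (a ^ 2 * π2 p.1 p.2))) μ :=
    integrable_finset_sum _ fun p _ => (hIint2 p.1 p.2).mul_const _
  have int3 : Integrable (fun ω => ∑ k,
      I k ω * ((π k * (1 - π k) / π k) * y k ^ 2 / (πs k) ^ 2)) μ :=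
    integrable_finset_sum _ fun k _ => (hIint k).mul_const _
  have int4 : Integrable (fun ω => ∑ p ∈ (Finset.univ : Finset (Fin N)).offDiag,
      I p.1 ω * I p.2 ω *
        (((π2 p.1 p.2 - π p.1 * π p.2) / π2 p.1 p.2) * y p.1 * y p.2
          / (πs p.1 * πs p.2))) μ :=
    integrable_finset_sum _ fun p _ => (hIint2 p.1 p.2).mul_const _
  -- compute LHS
  have int12 : Integrable (fun ω =>
      (∑ k ∈ U2, I k ω * ((π k - a) ^ 2 * y k ^ 2 / (a ^ 2 * π k)))
        + ∑ p ∈ U2.offDiag, I p.1 ω * I p.2 ω *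
            ((π p.1 - a) * (π p.2 - a) * y p.1 * y p.2 / (a ^ 2 * π2 p.1 p.2))) μ :=
    int1.add int2
  have int123 : Integrable (fun ω =>
      ((∑ k ∈ U2, I k ω * ((π k - a) ^ 2 * y k ^ 2 / (a ^ 2 * π k)))
        + ∑ p ∈ U2.offDiag, I p.1 ω * I p.2 ω *
            ((π p.1 - a) * (π p.2 - a) * y p.1 * y p.2 / (a ^ 2 * π2 p.1 p.2)))
        + ∑ k, I k ω * ((π k * (1 - π k) / π k) * y k ^ 2 / (πs k) ^ 2)) μ :=
    int12.add int3
  rw [integral_add int123 int4, integral_add int12 int3, integral_add int1 int2,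
    integral_finset_sum _ (fun k _ => (hIint k).mul_const _),
    integral_finset_sum _ (fun p _ => (hIint2 p.1 p.2).mul_const _),
    integral_finset_sum _ (fun k _ => (hIint k).mul_const _),
    integral_finset_sum _ (fun p _ => (hIint2 p.1 p.2).mul_const _)]
  -- pointwise rewrite of RHS integrand
  have key : (fun ω => ((∑ k, I k ω * y k / πs k) - ∑ k, y k) ^ 2)
      = fun ω => ((∑ k, I k ω * (y k / πs k) ^ 2)
          + (∑ p ∈ (Finset.univ : Finset (Fin N)).offDiag,
              I p.1 ω * I p.2 ω * (y p.1 / πs p.1 * (y p.2 / πs p.2)))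
          - 2 * (∑ k, y k) * (∑ k, I k ω * (y k / πs k)))
          + (∑ k, y k) ^ 2 := by
    funext ω
    have h1 : (∑ k, I k ω * y k / πs k) = ∑ k, I k ω * (y k / πs k) := by
      exact Finset.sum_congr rfl fun k _ => by ring
    rw [h1, sub_sq, sq_expand]
    have h2 : ∀ k : Fin N, (I k ω * (y k / πs k)) ^ 2 = I k ω * (y k / πs k) ^ 2 := by
      intro k; rw [mul_pow, sq, hIsq]
    have h3 : ∀ p ∈ (Finset.univ : Finset (Fin N)).offDiag,
        I p.1 ω * (y p.1 / πs p.1) * (I p.2 ω * (y p.2 / πs p.2))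
          = I p.1 ω * I p.2 ω * (y p.1 / πs p.1 * (y p.2 / πs p.2)) := by
      intro p _; ring
    rw [Finset.sum_congr rfl fun k _ => h2 k, Finset.sum_congr rfl h3]
    ring
  rw [key]
  -- compute RHS integral
  have intR1 : Integrable (fun ω => ∑ k, I k ω * (y k / πs k) ^ 2) μ :=
    integrable_finset_sum _ fun k _ => (hIint k).mul_const _
  have intR2 : Integrable (fun ω => ∑ p ∈ (Finset.univ : Finset (Fin N)).offDiag,
      I p.1 ω * I p.2 ω * (y p.1 / πs p.1 * (y p.2 / πs p.2))) μ :=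
    integrable_finset_sum _ fun p _ => (hIint2 p.1 p.2).mul_const _
  have intR3 : Integrable (fun ω => 2 * (∑ k, y k) * (∑ k, I k ω * (y k / πs k))) μ :=
    (integrable_finset_sum _ fun k _ => (hIint k).mul_const _).const_mul _
  have intR12 : Integrable (fun ω =>
      (∑ k, I k ω * (y k / πs k) ^ 2)
        + ∑ p ∈ (Finset.univ : Finset (Fin N)).offDiag,
            I p.1 ω * I p.2 ω * (y p.1 / πs p.1 * (y p.2 / πs p.2))) μ :=
    intR1.add intR2
  have intR123 : Integrable (fun ω =>
      ((∑ k, I k ω * (y k / πs k) ^ 2)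
        + ∑ p ∈ (Finset.univ : Finset (Fin N)).offDiag,
            I p.1 ω * I p.2 ω * (y p.1 / πs p.1 * (y p.2 / πs p.2)))
        - 2 * (∑ k, y k) * (∑ k, I k ω * (y k / πs k))) μ :=
    intR12.sub intR3
  rw [integral_add intR123 (integrable_const _), integral_sub intR12 intR3,
    integral_add intR1 intR2,
    integral_finset_sum _ (fun k _ => (hIint k).mul_const _),
    integral_finset_sum _ (fun p _ => (hIint2 p.1 p.2).mul_const _),
    MeasureTheory.integral_const_mul, integral_finset_sum _ (fun k _ => (hIint k).mul_const _),
    integral_const]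
  simp only [probReal_univ, ENNReal.toReal_one, smul_eq_mul, one_mul]
  -- now pure algebra over sums
  have s1 : (∑ i ∈ U2, ∫ ω, I i ω * ((π i - a) ^ 2 * y i ^ 2 / (a ^ 2 * π i)) ∂μ)
      = ∑ i ∈ U2, ((π i - a) / a * y i) ^ 2 :=
    Finset.sum_congr rfl fun k _ => by rw [hA]; field_simp [hπ0 k]
  have s2 : (∑ i ∈ U2.offDiag, ∫ ω, I i.1 ω * I i.2 ω *
        ((π i.1 - a) * (π i.2 - a) * y i.1 * y i.2 / (a ^ 2 * π2 i.1 i.2)) ∂μ)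
      = ∑ i ∈ U2.offDiag, ((π i.1 - a) / a * y i.1) * ((π i.2 - a) / a * y i.2) :=
    Finset.sum_congr rfl fun p hp => by
      have hne : p.1 ≠ p.2 := (Finset.mem_offDiag.mp hp).2.2
      rw [hB _ _ hne]
      field_simp [ne_of_gt (hπ2pos _ _ hne)]
  have s3 : (∑ i, ∫ ω, I i ω * (π i * (1 - π i) / π i * y i ^ 2 / πs i ^ 2) ∂μ)
      = ∑ i, (π i * (y i / πs i) ^ 2 - (π i * (y i / πs i)) ^ 2) :=
    Finset.sum_congr rfl fun k _ => by
      rw [hA]; field_simp [hπ0 k, hπs0 k]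
  have s4 : (∑ i ∈ Finset.univ.offDiag, ∫ ω, I i.1 ω * I i.2 ω *
        ((π2 i.1 i.2 - π i.1 * π i.2) / π2 i.1 i.2 * y i.1 * y i.2 / (πs i.1 * πs i.2)) ∂μ)
      = ∑ i ∈ (Finset.univ : Finset (Fin N)).offDiag,
          (π2 i.1 i.2 * (y i.1 / πs i.1 * (y i.2 / πs i.2))
            - (π i.1 * (y i.1 / πs i.1)) * (π i.2 * (y i.2 / πs i.2))) :=
    Finset.sum_congr rfl fun p hp => by
      have hne : p.1 ≠ p.2 := (Finset.mem_offDiag.mp hp).2.2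
      rw [hB _ _ hne]
      field_simp [ne_of_gt (hπ2pos _ _ hne), hπs0 p.1, hπs0 p.2]
  have r1 : (∑ i, ∫ ω, I i ω * (y i / πs i) ^ 2 ∂μ) = ∑ i, π i * (y i / πs i) ^ 2 :=
    Finset.sum_congr rfl fun k _ => hA k _
  have r2 : (∑ i ∈ Finset.univ.offDiag, ∫ ω, I i.1 ω * I i.2 ω *
        (y i.1 / πs i.1 * (y i.2 / πs i.2)) ∂μ)
      = ∑ i ∈ (Finset.univ : Finset (Fin N)).offDiag,
          π2 i.1 i.2 * (y i.1 / πs i.1 * (y i.2 / πs i.2)) :=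
    Finset.sum_congr rfl fun p hp => hB _ _ (Finset.mem_offDiag.mp hp).2.2 _
  have r3 : (∑ i, ∫ ω, I i ω * (y i / πs i) ∂μ) = ∑ i, π i * (y i / πs i) :=
    Finset.sum_congr rfl fun k _ => hA k _
  rw [s1, s2, s3, s4, r1, r2, r3, Finset.sum_sub_distrib, Finset.sum_sub_distrib]
  -- abbreviations
  set u : Fin N → ℝ := fun k => (π k - a) / a * y k with hu
  set w : Fin N → ℝ := fun k => π k * (y k / πs k) with hw
  have hsq1 : (∑ k ∈ U2, u k ^ 2) + ∑ p ∈ U2.offDiag, u p.1 * u p.2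
      = (∑ k ∈ U2, u k) ^ 2 := (sq_expand U2 u).symm
  have hsq2 : (∑ k, w k ^ 2) + ∑ p ∈ (Finset.univ : Finset (Fin N)).offDiag, w p.1 * w p.2
      = (∑ k, w k) ^ 2 := (sq_expand Finset.univ w).symm
  have hUeq : (∑ k ∈ U2, u k) = (∑ k, w k) - ∑ k, y k := by
    have step1 : (∑ k ∈ U2, u k) = ∑ k ∈ U2, (w k - y k) :=
      Finset.sum_congr rfl fun k hk => by
        simp only [hu, hw, hπs k, if_pos hk]
        field_simp
    have step2 : (∑ k ∈ U2, (w k - y k)) = ∑ k, (w k - y k) := by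
      refine Finset.sum_subset (Finset.subset_univ U2) fun k _ hk => ?_
      simp only [hw, hπs k, if_neg hk]
      field_simp [hπ0 k]
      ring
    rw [step1, step2, Finset.sum_sub_distrib]
  linear_combination hsq1 - hsq2 + ((∑ k ∈ U2, u k) + (∑ k, w k) - ∑ k, y k) * hUeq
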